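/- The simplex P := conv{(1,0,0), (0,1,0), (0,0,1), (−1,−1,−3)} associated to the weighted projective space ℙ(1,1,1,3) is mutated by the width vector w = (−1,2,0) with factor F := conv{(0,0,0), (2,1,3)} to the simplex conv{(−1,−1,−3), (0,0,1), (0,1,0), (4,3,6)} associated to ℙ(1,1,4,6); i.e., mut_w(P,F) = conv{(−1,−1,−3), (0,0,1), (0,1,0), (4,3,6)}. -/

import Mathlib

open Set Pointwise

noncomputable section

def pairing {n : ℕ} (w : Fin n → ℤ) (x : Fin n → ℚ) : ℚ :=
  ∑ i, (w i : ℚ) * x i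

def IsLatticePt {n : ℕ} (x : Fin n → ℚ) : Prop := ∀ i, ∃ z : ℤ, x i = (z : ℚ)

def IsLatticePolytope {n : ℕ} (P : Set (Fin n → ℚ)) : Prop :=
  ∃ S : Finset (Fin n → ℚ), (∀ x ∈ S, IsLatticePt x) ∧ P = convexHull ℚ (S : Set (Fin n → ℚ))

def IsPrimitive {n : ℕ} (w : Fin n → ℤ) : Prop := Finset.univ.gcd w = 1

def wSlice {n : ℕ} (w : Fin n → ℤ) (h : ℤ) (P : Set (Fin n → ℚ)) : Set (Fin n → ℚ) :=
  convexHull ℚ {x | x ∈ P ∧ IsLatticePt x ∧ pairing w x = (h : ℚ)}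

def mutation {n : ℕ} (w : Fin n → ℤ) (P F : Set (Fin n → ℚ)) (G : ℤ → Set (Fin n → ℚ)) :
    Set (Fin n → ℚ) :=
  convexHull ℚ ((⋃ h : ℤ, ⋃ _ : h < 0, G h) ∪
    ⋃ h : ℤ, ⋃ _ : 0 ≤ h, (wSlice w h P + (h : ℚ) • F))

def IsMutData {n : ℕ} (w : Fin n → ℤ) (P F : Set (Fin n → ℚ))
    (G : ℤ → Set (Fin n → ℚ)) : Prop :=
  IsLatticePolytope F ∧ F.Nonempty ∧ (∀ x ∈ F, pairing w x = 0) ∧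
  ∀ h : ℤ, h < 0 →
    (G h = ∅ ∨ IsLatticePolytope (G h)) ∧
    {v | v ∈ P.extremePoints ℚ ∧ pairing w v = (h : ℚ)} ⊆ G h + (-(h : ℚ)) • F ∧
    G h + (-(h : ℚ)) • F ⊆ wSlice w h P

def dpair {n : ℕ} (u v : Fin n → ℚ) : ℚ := ∑ i, u i * v i

def dualP {n : ℕ} (P : Set (Fin n → ℚ)) : Set (Fin n → ℚ) := {u | ∀ v ∈ P, -1 ≤ dpair u v}

/-! ### Auxiliary lemmas -/

lemma pairing_lin {n : ℕ} (w : Fin n → ℤ) : IsLinearMap ℚ (pairing w) := by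
  constructor
  · intro x y; simp [pairing, mul_add, Finset.sum_add_distrib]
  · intro c x; simp [pairing, Finset.mul_sum, smul_eq_mul, mul_left_comm]

lemma pairing_eval (x : Fin 3 → ℚ) : pairing ![-1, 2, 0] x = -x 0 + 2 * x 1 := by
  simp [pairing, Fin.sum_univ_three]

lemma zero3 : (![0, 0, 0] : Fin 3 → ℚ) = 0 := by
  funext i; fin_cases i <;> rfl

lemma halfspace_convex (a : Fin 3 → ℚ) (r : ℚ) :
    Convex ℚ {x : Fin 3 → ℚ | r ≤ a 0 * x 0 + a 1 * x 1 + a 2 * x 2} :=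
  convex_halfSpace_ge ⟨fun x y => by simp; ring, fun c x => by simp; ring⟩ r

lemma mem_hull4 {E : Type*} [AddCommGroup E] [Module ℚ E] (p1 p2 p3 p4 : E) {a b c d : ℚ}
    (ha : 0 ≤ a) (hb : 0 ≤ b) (hc : 0 ≤ c) (hd : 0 ≤ d) (hsum : a + b + c + d = 1) :
    a • p1 + b • p2 + c • p3 + d • p4 ∈ convexHull ℚ ({p1, p2, p3, p4} : Set E) := by
  have := (convex_convexHull ℚ ({p1, p2, p3, p4} : Set E)).sum_mem (t := Finset.univ)
    (w := ![a, b, c, d]) (z := ![p1, p2, p3, p4]) ?_ ?_ ?_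
  · simpa [Fin.sum_univ_four] using this
  · intro i _; fin_cases i <;> simpa
  · simp [Fin.sum_univ_four, hsum]
  · intro i _; fin_cases i <;> exact subset_convexHull ℚ _ (by simp)

lemma P_facets {x : Fin 3 → ℚ}
    (hx : x ∈ convexHull ℚ ({![1, 0, 0], ![0, 1, 0], ![0, 0, 1], ![-1, -1, -3]} :
      Set (Fin 3 → ℚ))) :
    0 ≤ 5 * x 0 - x 1 - x 2 + 1 ∧ 0 ≤ -x 0 + 5 * x 1 - x 2 + 1 ∧
    0 ≤ -x 0 - x 1 + x 2 + 1 ∧ 0 ≤ -x 0 - x 1 - x 2 + 1 := by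
  have gen : ∀ (a : Fin 3 → ℚ) (r : ℚ),
      (∀ v ∈ ({![1, 0, 0], ![0, 1, 0], ![0, 0, 1], ![-1, -1, -3]} : Set (Fin 3 → ℚ)),
        r ≤ a 0 * v 0 + a 1 * v 1 + a 2 * v 2) →
      r ≤ a 0 * x 0 + a 1 * x 1 + a 2 * x 2 := fun a r hv =>
    convexHull_min hv (halfspace_convex a r) hx
  have g1 := gen ![5, -1, -1] (-1) (by
    intro v hv
    simp only [Set.mem_insert_iff, Set.mem_singleton_iff] at hv
    rcases hv with rfl | rfl | rfl | rfl <;> norm_num [Matrix.cons_val_two, Matrix.tail_cons, Matrix.head_cons])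
  have g2 := gen ![-1, 5, -1] (-1) (by
    intro v hv
    simp only [Set.mem_insert_iff, Set.mem_singleton_iff] at hv
    rcases hv with rfl | rfl | rfl | rfl <;> norm_num [Matrix.cons_val_two, Matrix.tail_cons, Matrix.head_cons])
  have g3 := gen ![-1, -1, 1] (-1) (by
    intro v hv
    simp only [Set.mem_insert_iff, Set.mem_singleton_iff] at hv
    rcases hv with rfl | rfl | rfl | rfl <;> norm_num [Matrix.cons_val_two, Matrix.tail_cons, Matrix.head_cons])
  have g4 := gen ![-1, -1, -1] (-1) (by
    intro v hv
    simp only [Set.mem_insert_iff, Set.mem_singleton_iff] at hv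
    rcases hv with rfl | rfl | rfl | rfl <;> norm_num [Matrix.cons_val_two, Matrix.tail_cons, Matrix.head_cons])
  norm_num [Matrix.cons_val_two, Matrix.tail_cons, Matrix.head_cons] at g1 g2 g3 g4
  refine ⟨by linarith, by linarith, by linarith, by linarith⟩

lemma claimC {x : Fin 3 → ℚ} {c : ℚ}
    (h1 : 0 ≤ 5 * x 0 - x 1 - x 2 + 1) (h2 : 0 ≤ -x 0 + 5 * x 1 - x 2 + 1)
    (h3 : 0 ≤ -x 0 - x 1 + x 2 + 1) (h4 : 0 ≤ -x 0 - x 1 - x 2 + 1)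
    (hc0 : 0 ≤ c) (hcp : c ≤ -x 0 + 2 * x 1) :
    x + c • ![2, 1, 3] ∈ convexHull ℚ
      ({![-1, -1, -3], ![0, 0, 1], ![0, 1, 0], ![4, 3, 6]} : Set (Fin 3 → ℚ)) := by
  set y0 : ℚ := x 0 + 2 * c with hy0
  set y1 : ℚ := x 1 + c with hy1
  set y2 : ℚ := x 2 + 3 * c with hy2
  have key := mem_hull4 (![-1, -1, -3] : Fin 3 → ℚ) ![0, 0, 1] ![0, 1, 0] ![4, 3, 6]
    (a := (2 * y0 - y1 - y2 + 1) / 3) (b := (-y0 - y1 + y2 + 1) / 2)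
    (c := (-7 * y0 + 11 * y1 - y2 + 1) / 12) (d := (5 * y0 - y1 - y2 + 1) / 12)
    (by rw [hy0, hy1, hy2]; linarith) (by rw [hy0, hy1, hy2]; linarith)
    (by rw [hy0, hy1, hy2]; linarith) (by rw [hy0, hy1, hy2]; linarith) (by ring)
  have heq : x + c • ![2, 1, 3] =
      ((2 * y0 - y1 - y2 + 1) / 3) • (![-1, -1, -3] : Fin 3 → ℚ) +
      ((-y0 - y1 + y2 + 1) / 2) • ![0, 0, 1] +
      ((-7 * y0 + 11 * y1 - y2 + 1) / 12) • ![0, 1, 0] +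
      ((5 * y0 - y1 - y2 + 1) / 12) • ![4, 3, 6] := by
    funext i
    fin_cases i <;>
      simp [hy0, hy1, hy2, Pi.add_apply, Pi.smul_apply, smul_eq_mul] <;> ring
  rw [heq]; exact key

abbrev Pset : Set (Fin 3 → ℚ) :=
  convexHull ℚ {![1, 0, 0], ![0, 1, 0], ![0, 0, 1], ![-1, -1, -3]}
abbrev Fset : Set (Fin 3 → ℚ) := convexHull ℚ {![0, 0, 0], ![2, 1, 3]}

lemma wSlice_sub (h : ℤ) :
    wSlice ![-1, 2, 0] h Pset ⊆ {x | x ∈ Pset ∧ pairing ![-1, 2, 0] x = (h : ℚ)} :=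
  convexHull_min (fun x hx => ⟨hx.1, hx.2.2⟩)
    ((convex_convexHull ℚ _).inter (convex_hyperplane (pairing_lin _) _))

lemma F_elem {f : Fin 3 → ℚ} (hf : f ∈ Fset) :
    ∃ b : ℚ, 0 ≤ b ∧ b ≤ 1 ∧ f = b • ![2, 1, 3] := by
  rw [show Fset = convexHull ℚ {![0,0,0], ![2,1,3]} from rfl, convexHull_pair] at hf
  obtain ⟨a, b, ha, hb, hab, hf⟩ := hf
  refine ⟨b, hb, by linarith, ?_⟩
  rw [← hf, zero3, smul_zero, zero_add]

lemma v1_mem : (![1, 0, 0] : Fin 3 → ℚ) ∈ Pset :=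
  subset_convexHull ℚ _ (by left; rfl)
lemma v2_mem : (![0, 1, 0] : Fin 3 → ℚ) ∈ Pset :=
  subset_convexHull ℚ _ (by right; left; rfl)
lemma v3_mem : (![0, 0, 1] : Fin 3 → ℚ) ∈ Pset :=
  subset_convexHull ℚ _ (by right; right; left; rfl)
lemma v4_mem : (![-1, -1, -3] : Fin 3 → ℚ) ∈ Pset :=
  subset_convexHull ℚ _ (by right; right; right; rfl)

lemma lat1 : IsLatticePt (![1, 0, 0] : Fin 3 → ℚ) := by
  intro i; fin_cases i
  exacts [⟨1, by norm_num⟩, ⟨0, by norm_num⟩, ⟨0, by norm_num⟩]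
lemma lat2 : IsLatticePt (![0, 1, 0] : Fin 3 → ℚ) := by
  intro i; fin_cases i
  exacts [⟨0, by norm_num⟩, ⟨1, by norm_num⟩, ⟨0, by norm_num⟩]
lemma lat3 : IsLatticePt (![0, 0, 1] : Fin 3 → ℚ) := by
  intro i; fin_cases i
  exacts [⟨0, by norm_num⟩, ⟨0, by norm_num⟩, ⟨1, by norm_num⟩]
lemma lat4 : IsLatticePt (![-1, -1, -3] : Fin 3 → ℚ) := by
  intro i; fin_cases i
  exacts [⟨-1, by norm_num⟩, ⟨-1, by norm_num⟩, ⟨-3, by norm_num⟩]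

lemma v1_slice : (![1, 0, 0] : Fin 3 → ℚ) ∈
    {x | x ∈ Pset ∧ IsLatticePt x ∧ pairing ![-1, 2, 0] x = ((-1 : ℤ) : ℚ)} :=
  ⟨v1_mem, lat1, by rw [pairing_eval]; norm_num⟩
lemma v4_slice : (![-1, -1, -3] : Fin 3 → ℚ) ∈
    {x | x ∈ Pset ∧ IsLatticePt x ∧ pairing ![-1, 2, 0] x = ((-1 : ℤ) : ℚ)} :=
  ⟨v4_mem, lat4, by rw [pairing_eval]; norm_num⟩
lemma v2_slice : (![0, 1, 0] : Fin 3 → ℚ) ∈ wSlice ![-1, 2, 0] 2 Pset :=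
  subset_convexHull ℚ _ ⟨v2_mem, lat2, by rw [pairing_eval]; norm_num⟩
lemma v3_slice : (![0, 0, 1] : Fin 3 → ℚ) ∈ wSlice ![-1, 2, 0] 0 Pset :=
  subset_convexHull ℚ _ ⟨v3_mem, lat3, by rw [pairing_eval]; norm_num⟩

lemma F0_mem : (![0, 0, 0] : Fin 3 → ℚ) ∈ Fset := subset_convexHull ℚ _ (by left; rfl)
lemma Fu_mem : (![2, 1, 3] : Fin 3 → ℚ) ∈ Fset := subset_convexHull ℚ _ (by right; rfl)

/-- The simplex of `ℙ(1,1,1,3)` is mutated by the width vector `w = (-1,2,0)` with factor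
`F = conv{(0,0,0),(2,1,3)}` (and `G_{-1} = {(-1,-1,-3)}`) to the simplex of `ℙ(1,1,4,6)`. -/
theorem mutation_P1113_to_P1146 :
    IsMutData ![-1, 2, 0]
      (convexHull ℚ {![1, 0, 0], ![0, 1, 0], ![0, 0, 1], ![-1, -1, -3]})
      (convexHull ℚ {![0, 0, 0], ![2, 1, 3]})
      (fun h => if h = -1 then {![-1, -1, -3]} else ∅) ∧
    mutation ![-1, 2, 0]
      (convexHull ℚ {![1, 0, 0], ![0, 1, 0], ![0, 0, 1], ![-1, -1, -3]})
      (convexHull ℚ {![0, 0, 0], ![2, 1, 3]})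
      (fun h => if h = -1 then {![-1, -1, -3]} else ∅) =
    convexHull ℚ {![-1, -1, -3], ![0, 0, 1], ![0, 1, 0], ![4, 3, 6]} := by
  constructor
  · refine ⟨⟨{![0, 0, 0], ![2, 1, 3]}, ?_, ?_⟩,
      ⟨![0, 0, 0], F0_mem⟩, ?_, ?_⟩
    · intro x hx
      simp only [Finset.mem_insert, Finset.mem_singleton] at hx
      rcases hx with rfl | rfl
      · intro i; fin_cases i
        exacts [⟨0, by norm_num⟩, ⟨0, by norm_num⟩, ⟨0, by norm_num⟩]
      · intro i; fin_cases i
        exacts [⟨2, by norm_num⟩, ⟨1, by norm_num⟩, ⟨3, by norm_num⟩]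
    · simp
    · intro x hx
      refine convexHull_min ?_ (convex_hyperplane (pairing_lin _) 0) hx
      intro v hv
      simp only [Set.mem_insert_iff, Set.mem_singleton_iff] at hv
      rcases hv with rfl | rfl <;> (show pairing _ _ = 0) <;> rw [pairing_eval] <;> norm_num
    · intro h hneg
      by_cases hh : h = -1
      · subst hh
        simp only [reduceIte]
        refine ⟨Or.inr ⟨{![-1, -1, -3]}, ?_, by simp⟩, ?_, ?_⟩
        · intro x hx
          simp only [Finset.mem_singleton] at hx
          subst hx; exact lat4
        · rintro v ⟨hve, hvp⟩
          have hv4 := extremePoints_convexHull_subset hve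
          simp only [Set.mem_insert_iff, Set.mem_singleton_iff] at hv4
          rcases hv4 with rfl | rfl | rfl | rfl
          · have he : (![1, 0, 0] : Fin 3 → ℚ) =
                ![-1, -1, -3] + (-((- 1 : ℤ) : ℚ)) • ![2, 1, 3] := by
              funext i; fin_cases i <;> norm_num
            rw [he]
            exact Set.add_mem_add (Set.mem_singleton _) (Set.smul_mem_smul_set Fu_mem)
          · rw [pairing_eval] at hvp; norm_num at hvp
          · rw [pairing_eval] at hvp; norm_num at hvp
          · have he : (![-1, -1, -3] : Fin 3 → ℚ) =
                ![-1, -1, -3] + (-((- 1 : ℤ) : ℚ)) • ![0, 0, 0] := by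
              funext i; fin_cases i <;> norm_num
            exact Set.mem_add.2 ⟨_, Set.mem_singleton _, _,
              Set.smul_mem_smul_set F0_mem, he.symm⟩
        · intro z hz
          obtain ⟨g, hg, y, hy, hzy⟩ := Set.mem_add.1 hz
          simp only [Set.mem_singleton_iff] at hg
          obtain ⟨f, hf, rfl⟩ := hy
          obtain ⟨b, hb0, hb1, rfl⟩ := F_elem hf
          subst hg
          have hz2 : z = (1 - b) • (![-1, -1, -3] : Fin 3 → ℚ) + b • ![1, 0, 0] := by
            rw [← hzy]; funext i; fin_cases i <;>
              simp [Pi.add_apply, Pi.smul_apply, smul_eq_mul] <;> ring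
          rw [hz2]
          exact (convex_convexHull ℚ _) (subset_convexHull ℚ _ v4_slice)
            (subset_convexHull ℚ _ v1_slice) (by linarith) hb0 (by ring)
      · have hGh : (fun h : ℤ => if h = -1 then ({![-1, -1, -3]} : Set (Fin 3 → ℚ)) else ∅) h
            = ∅ := if_neg hh
        refine ⟨Or.inl hGh, ?_, ?_⟩
        · rintro v ⟨hve, hvp⟩
          exfalso
          have hv4 := extremePoints_convexHull_subset hve
          simp only [Set.mem_insert_iff, Set.mem_singleton_iff] at hv4
          rcases hv4 with rfl | rfl | rfl | rfl <;> rw [pairing_eval] at hvp <;>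
            norm_num at hvp <;>
            [ (exact hh (by exact_mod_cast hvp.symm));
              (exact absurd (show h = 2 by exact_mod_cast hvp.symm) (by omega));
              (exact absurd (show h = 0 by exact_mod_cast hvp.symm) (by omega));
              (exact hh (by exact_mod_cast hvp.symm))]
        · rw [hGh]
          simp [Set.empty_add]
  · apply Set.Subset.antisymm
    · unfold mutation
      refine convexHull_min ?_ (convex_convexHull ℚ _)
      rintro z (hz | hz)
      · simp only [Set.mem_iUnion] at hz
        obtain ⟨h, hneg, hzG⟩ := hz
        by_cases hh : h = -1
        · subst hh
          rw [if_pos rfl] at hzG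
          simp only [Set.mem_singleton_iff] at hzG
          subst hzG
          exact subset_convexHull ℚ _ (by left; rfl)
        · rw [if_neg hh] at hzG
          exact absurd hzG (Set.notMem_empty z)
      · simp only [Set.mem_iUnion] at hz
        obtain ⟨h, hpos, hz⟩ := hz
        obtain ⟨xx, hxx, y, hy, hzy⟩ := Set.mem_add.1 hz
        obtain ⟨hxP, hxpair⟩ := wSlice_sub h hxx
        obtain ⟨f, hfF, rfl⟩ := hy
        obtain ⟨b, hb0, hb1, rfl⟩ := F_elem hfF
        rw [pairing_eval] at hxpair
        have hq0 : (0 : ℚ) ≤ (h : ℚ) := by exact_mod_cast hpos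
        have hc0 : (0 : ℚ) ≤ (h : ℚ) * b := mul_nonneg hq0 hb0
        have hcp : (h : ℚ) * b ≤ -xx 0 + 2 * xx 1 := by
          rw [hxpair]; nlinarith
        obtain ⟨g1, g2, g3, g4⟩ := P_facets hxP
        have hmem := claimC g1 g2 g3 g4 hc0 hcp
        have hzz : z = xx + ((h : ℚ) * b) • ![2, 1, 3] := by
          rw [← hzy]; simp only [smul_smul]
        rw [hzz]; exact hmem
    · unfold mutation
      refine convexHull_min ?_ (convex_convexHull ℚ _)
      intro z hz
      simp only [Set.mem_insert_iff, Set.mem_singleton_iff] at hz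
      apply subset_convexHull ℚ
      rcases hz with rfl | rfl | rfl | rfl
      · left
        simp only [Set.mem_iUnion]
        exact ⟨-1, by norm_num, by rw [if_pos rfl]; exact Set.mem_singleton _⟩
      · right
        simp only [Set.mem_iUnion]
        refine ⟨0, le_refl 0, ?_⟩
        have he : (![0, 0, 1] : Fin 3 → ℚ) = ![0, 0, 1] + ((0 : ℤ) : ℚ) • ![0, 0, 0] := by
          funext i; fin_cases i <;> norm_num
        exact Set.mem_add.2 ⟨_, v3_slice, _, Set.smul_mem_smul_set F0_mem, he.symm⟩
      · right
        simp only [Set.mem_iUnion]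
        refine ⟨2, by norm_num, ?_⟩
        have he : (![0, 1, 0] : Fin 3 → ℚ) = ![0, 1, 0] + ((2 : ℤ) : ℚ) • ![0, 0, 0] := by
          funext i; fin_cases i <;> norm_num
        exact Set.mem_add.2 ⟨_, v2_slice, _, Set.smul_mem_smul_set F0_mem, he.symm⟩
      · right
        simp only [Set.mem_iUnion]
        refine ⟨2, by norm_num, ?_⟩
        have he : (![4, 3, 6] : Fin 3 → ℚ) = ![0, 1, 0] + ((2 : ℤ) : ℚ) • ![2, 1, 3] := by
          funext i; fin_cases i <;> norm_num
        exact Set.mem_add.2 ⟨_, v2_slice, _, Set.smul_mem_smul_set Fu_mem, he.symm⟩
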